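/- Let A be an L×N complex matrix satisfying the restricted isometry property of order 2s with constant δ₂ₛᴬ, let V be an N×N diagonal matrix with at most s nonzero diagonal entries, let G be an N×N complex matrix, and suppose γ = ‖VG‖₂ < 1/2 (spectral norm), so that I − VG is invertible. Then for every s-sparse x ∈ ℂ^N, (1 − δ₂ₛᴬ) ( (1−2γ)/(1−γ) )² ‖x‖₂² ≤ ‖ A (I − VG)^{-1} x ‖₂² ≤ ( (1 + δ₂ₛᴬ) / (1−γ)² ) ‖x‖₂². -/

import Mathlib

open Matrix Finset Filter

noncomputable section

/-- A vector is `s`-sparse if it has at most `s` nonzero entries. -/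
def sparse {n : Type*} (s : ℕ) (x : n → ℂ) : Prop := {i | x i ≠ 0}.ncard ≤ s

/-- The ℓ² norm of the `j`-th column of a matrix. -/
def colNorm {m n : Type*} [Fintype m] (A : Matrix m n ℂ) (j : n) : ℝ :=
  Real.sqrt (∑ i, ‖A i j‖ ^ 2)

/-- The mutual coherence of a matrix:
`μ(A) = max_{j ≠ k} |⟨A_j, A_k⟩| / (‖A_j‖₂ ‖A_k‖₂)`. -/
def coherence {m n : Type*} [Fintype m] [Fintype n] (A : Matrix m n ℂ) : ℝ :=
  sSup {r : ℝ | ∃ j k, j ≠ k ∧ r = ‖(Aᴴ * A) j k‖ / (colNorm A j * colNorm A k)}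

/-- The ℓ¹ norm of a vector. -/
def l1 {n : Type*} [Fintype n] (x : n → ℂ) : ℝ := ∑ i, ‖x i‖

/-- The ℓ^∞ norm of a vector. -/
def linf {n : Type*} [Fintype n] (x : n → ℂ) : ℝ := ⨆ i, ‖x i‖

/-- The squared ℓ² norm of a vector. -/
def l2sq {n : Type*} [Fintype n] (x : n → ℂ) : ℝ := ∑ i, ‖x i‖ ^ 2

/-- The entrywise max norm of a matrix, `‖M‖_max = max_{i,j} |M_{ij}|`. -/
def maxNorm {m n : Type*} [Fintype m] [Fintype n] (A : Matrix m n ℂ) : ℝ :=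
  ⨆ p : m × n, ‖A p.1 p.2‖

/-- The induced ℓ¹ matrix norm (maximum absolute column sum). -/
def matL1 {m n : Type*} [Fintype m] [Fintype n] (A : Matrix m n ℂ) : ℝ :=
  ⨆ j, ∑ i, ‖A i j‖

/-- `x` is a hard thresholding `H_s(z)` of `z`: it agrees with `z` on an
index set `I` of size `s` consisting of entries of largest modulus, and
vanishes outside `I`. -/
def IsHardThreshold {n : Type*} [Fintype n] (s : ℕ) (z x : n → ℂ) : Prop :=
  ∃ I : Finset n, I.card = s ∧ (∀ i ∈ I, ∀ j ∉ I, ‖z j‖ ≤ ‖z i‖) ∧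
    (∀ i ∈ I, x i = z i) ∧ (∀ i ∉ I, x i = 0)

/-- `A` satisfies the restricted isometry property of order `t` with constant `δ`. -/
def SatisfiesRIP {m n : Type*} [Fintype m] [Fintype n] (A : Matrix m n ℂ) (t : ℕ) (δ : ℝ) :
    Prop :=
  0 < δ ∧ δ < 1 ∧ ∀ z : n → ℂ, sparse t z →
    (1 - δ) * l2sq z ≤ l2sq (A.mulVec z) ∧ l2sq (A.mulVec z) ≤ (1 + δ) * l2sq z

/-- The spectral (operator ℓ²) norm of a square matrix. -/
def specNorm {n : Type*} [Fintype n] [DecidableEq n] (M : Matrix n n ℂ) : ℝ :=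
  ‖Matrix.toEuclideanCLM (𝕜 := ℂ) M‖


lemma l2sq_eq_normsq {N : ℕ} (z : Fin N → ℂ) :
    l2sq z = ‖(WithLp.equiv 2 (Fin N → ℂ)).symm z‖ ^ 2 := by
  rw [EuclideanSpace.norm_eq, Real.sq_sqrt (by positivity)]
  rfl


lemma sandwich_scalar (γ δ a b p : ℝ) (hγ0 : 0 ≤ γ) (hγh : γ < 1/2)
    (hδ0 : 0 < δ) (hδ1 : δ < 1) (ha : 0 ≤ a) (hb : 0 ≤ b)
    (h1 : b * (1 - γ) ≤ a) (h2 : (1 - 2 * γ) / (1 - γ) * a ≤ b)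
    (h3 : (1 - δ) * b ^ 2 ≤ p) (h4 : p ≤ (1 + δ) * b ^ 2) :
    (1 - δ) * ((1 - 2 * γ) / (1 - γ)) ^ 2 * a ^ 2 ≤ p ∧
      p ≤ (1 + δ) / (1 - γ) ^ 2 * a ^ 2 := by
  have hγ1 : (0:ℝ) < 1 - γ := by linarith
  have hc0 : 0 ≤ (1 - 2 * γ) / (1 - γ) := div_nonneg (by linarith) hγ1.le
  constructor
  · have hsq : ((1 - 2 * γ) / (1 - γ) * a) ^ 2 ≤ b ^ 2 :=
      pow_le_pow_left₀ (mul_nonneg hc0 ha) h2 2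
    calc (1 - δ) * ((1 - 2 * γ) / (1 - γ)) ^ 2 * a ^ 2
        = (1 - δ) * ((1 - 2 * γ) / (1 - γ) * a) ^ 2 := by ring
      _ ≤ (1 - δ) * b ^ 2 := mul_le_mul_of_nonneg_left hsq (by linarith)
      _ ≤ p := h3
  · have hsq : ((1 - γ) * b) ^ 2 ≤ a ^ 2 :=
      pow_le_pow_left₀ (mul_nonneg hγ1.le hb) (by linarith [h1, mul_comm b (1 - γ)]) 2
    calc p ≤ (1 + δ) * b ^ 2 := h4
      _ = (1 + δ) / (1 - γ) ^ 2 * ((1 - γ) * b) ^ 2 := by field_simp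
      _ ≤ (1 + δ) / (1 - γ) ^ 2 * a ^ 2 :=
          mul_le_mul_of_nonneg_left hsq (div_nonneg (by linarith) (by positivity))

/-- Appendix B: RIP sandwich bound for `A(I − VG)⁻¹`. -/
theorem RIP_resolvent_bound {L N : ℕ} (s : ℕ)
    (A : Matrix (Fin L) (Fin N) ℂ)
    (δA : ℝ) (hRIP : SatisfiesRIP A (2 * s) δA)
    (v : Fin N → ℂ) (hv : sparse s v)
    (G : Matrix (Fin N) (Fin N) ℂ)
    (γ : ℝ) (hγ : γ = specNorm (Matrix.diagonal v * G)) (hγhalf : γ < 1 / 2) :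
    ∀ x : Fin N → ℂ, sparse s x →
      (1 - δA) * ((1 - 2 * γ) / (1 - γ)) ^ 2 * l2sq x ≤
        l2sq ((A * (1 - Matrix.diagonal v * G)⁻¹).mulVec x) ∧
      l2sq ((A * (1 - Matrix.diagonal v * G)⁻¹).mulVec x) ≤
        (1 + δA) / (1 - γ) ^ 2 * l2sq x := by
  intro x hx
  set M : Matrix (Fin N) (Fin N) ℂ := Matrix.diagonal v * G with hM
  set f := Matrix.toEuclideanCLM (𝕜 := ℂ) (n := Fin N) with hf
  have hγ0 : 0 ≤ γ := hγ ▸ norm_nonneg _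
  have hγ' : ‖f M‖ = γ := by rw [hγ]; rfl
  have h1 : ‖f M‖ < 1 := by rw [hγ']; linarith
  set u := Units.oneSub (f M) h1 with hu
  set B := f.symm (↑u⁻¹) with hB
  have hfB : f B = ↑u⁻¹ := f.apply_symm_apply _
  have hBM : (1 - M) * B = 1 := by
    have h2 : f ((1 - M) * B) = 1 := by
      rw [_root_.map_mul, _root_.map_sub, _root_.map_one, hfB]
      exact u.mul_inv
    exact f.injective (h2.trans (_root_.map_one f).symm)
  have hMB : B * (1 - M) = 1 := by
    have h2 : f (B * (1 - M)) = 1 := by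
      rw [_root_.map_mul, _root_.map_sub, _root_.map_one, hfB]
      exact u.inv_mul
    exact f.injective (h2.trans (_root_.map_one f).symm)
  have hinv : (1 - M)⁻¹ = B := Matrix.inv_eq_right_inv hBM
  set y := B.mulVec x with hy
  have hxy : y - M.mulVec y = x := by
    have : ((1 - M) * B).mulVec x = x := by rw [hBM, Matrix.one_mulVec]
    rw [← Matrix.mulVec_mulVec, Matrix.sub_mulVec, Matrix.one_mulVec] at this
    exact this
  -- sparsity of y
  have hy2s : sparse (2 * s) y := by
    have hsub : {i | y i ≠ 0} ⊆ {i | x i ≠ 0} ∪ {i | v i ≠ 0} := by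
      intro i hi
      by_contra hcon
      simp only [Set.mem_union, Set.mem_setOf_eq, not_or, not_not] at hcon
      apply hi
      have hyi : y i = x i + (M.mulVec y) i := by
        have := congrFun hxy i
        simp only [Pi.sub_apply] at this
        linear_combination this
      have hMi : (M.mulVec y) i = v i * (G.mulVec y) i := by
        rw [hM, ← Matrix.mulVec_mulVec, Matrix.mulVec_diagonal]
      rw [hyi, hMi, hcon.1, hcon.2, zero_mul, add_zero]
    calc {i | y i ≠ 0}.ncard ≤ ({i | x i ≠ 0} ∪ {i | v i ≠ 0}).ncard :=
          Set.ncard_le_ncard hsub (Set.toFinite _)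
      _ ≤ {i | x i ≠ 0}.ncard + {i | v i ≠ 0}.ncard := Set.ncard_union_le _ _
      _ ≤ s + s := add_le_add hx hv
      _ = 2 * s := by ring
  -- norms
  set X := (WithLp.equiv 2 (Fin N → ℂ)).symm x with hX
  set Y := (WithLp.equiv 2 (Fin N → ℂ)).symm y with hY
  have hfMY : f M Y = (WithLp.equiv 2 (Fin N → ℂ)).symm (M.mulVec y) := by
    rw [hY]; rfl
  have hXY : Y - f M Y = X := by
    rw [hfMY, hX, hY, ← hxy]; rfl
  have hMYle : ‖f M Y‖ ≤ γ * ‖Y‖ := by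
    calc ‖f M Y‖ ≤ ‖f M‖ * ‖Y‖ := (f M).le_opNorm Y
      _ = γ * ‖Y‖ := by rw [hγ']
  have hγ1 : (0:ℝ) < 1 - γ := by linarith
  have hYle : ‖Y‖ * (1 - γ) ≤ ‖X‖ := by
    have : ‖Y‖ - ‖f M Y‖ ≤ ‖Y - f M Y‖ := norm_sub_norm_le _ _
    rw [hXY] at this
    nlinarith
  have hYge : (1 - 2 * γ) / (1 - γ) * ‖X‖ ≤ ‖Y‖ := by
    have h2 : ‖X‖ ≤ ‖Y‖ + ‖f M Y‖ := by
      calc ‖X‖ = ‖Y - f M Y‖ := by rw [hXY]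
        _ ≤ ‖Y‖ + ‖f M Y‖ := norm_sub_le _ _
    rw [div_mul_eq_mul_div, div_le_iff₀ hγ1]
    nlinarith [norm_nonneg X, norm_nonneg Y]
  -- RIP
  obtain ⟨hδ0, hδ1, hrip⟩ := hRIP
  obtain ⟨hlow, hhigh⟩ := hrip y hy2s
  have hgoal : (A * (1 - M)⁻¹).mulVec x = A.mulVec y := by
    rw [hinv, ← Matrix.mulVec_mulVec]
  rw [hgoal]
  have hlx : l2sq x = ‖X‖ ^ 2 := l2sq_eq_normsq x
  have hly : l2sq y = ‖Y‖ ^ 2 := l2sq_eq_normsq y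
  rw [hly] at hlow hhigh
  rw [hlx]
  exact sandwich_scalar γ δA ‖X‖ ‖Y‖ _ hγ0 hγhalf hδ0 hδ1 (norm_nonneg X) (norm_nonneg Y)
    hYle hYge hlow hhigh

end
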